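/- Let a, b, c, d be positive real numbers such that each of a, b, c, d is less than the sum of the other three, and suppose (a+b−c−d)(a−b+c−d)(a−b−c+d) = 0 (the 'short aligned' degenerate case). Then the uniformizer R is surjective: for every w ∈ ℂ with |w| = ac/(bd) there exists a configuration V of Q(a,b,c,d) with R(V) = w. -/

import Mathlib

set_option maxHeartbeats 1600000

/-- The uniformizer `R(V) = [v₁,v₃;v₂,v₄]` of a planar quadrilateral. -/
noncomputable def uniformizer (v₁ v₂ v₃ v₄ : ℂ) : ℂ :=
  ((v₂ - v₁) / (v₂ - v₃)) * ((v₄ - v₃) / (v₄ - v₁))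

/-- A planar configuration of the quadrilateral linkage `Q(a,b,c,d)`. -/
def IsConfig (a b c d : ℝ) (v₁ v₂ v₃ v₄ : ℂ) : Prop :=
  ‖v₂ - v₁‖ = a ∧ ‖v₃ - v₂‖ = b ∧
  ‖v₄ - v₃‖ = c ∧ ‖v₁ - v₄‖ = d

/-- Each side-length is less than the sum of the other three. -/
def StrictQuad (a b c d : ℝ) : Prop :=
  a < b + c + d ∧ b < a + c + d ∧ c < a + b + d ∧ d < a + b + c

private lemma abs_eq_of_normSq' (X : ℂ) (r : ℝ) (hr : 0 ≤ r) (h : Complex.normSq X = r^2) :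
    ‖X‖ = r := by
  rw [Complex.norm_def, h, Real.sqrt_sq hr]

private lemma quad_aux (a b c d : ℝ) (ha : 0 < a) (hb : 0 < b) (hc : 0 < c) (hd : 0 < d)
    (ω z : ℂ) (hnsω : Complex.normSq ω = 1) (hz1 : Complex.normSq z = 1)
    (w : ℂ) (hwdef : w = ω * (a*c)/(b*d))
    (hzp : ((starRingEnd ℂ) z * (2*b*c*ω - 2*a*d)).re = b^2+c^2-a^2-d^2) :
    ∃ v₁ v₂ v₃ v₄ : ℂ, IsConfig a b c d v₁ v₂ v₃ v₄ ∧ uniformizer v₁ v₂ v₃ v₄ = w := by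
  have ha' : (a:ℂ) ≠ 0 := Complex.ofReal_ne_zero.mpr ha.ne'
  have hb' : (b:ℂ) ≠ 0 := Complex.ofReal_ne_zero.mpr hb.ne'
  have hc' : (c:ℂ) ≠ 0 := Complex.ofReal_ne_zero.mpr hc.ne'
  have hd' : (d:ℂ) ≠ 0 := Complex.ofReal_ne_zero.mpr hd.ne'
  have hz2 : z.re^2 + z.im^2 = 1 := by
    have := hz1; rw [Complex.normSq_apply] at this; nlinarith [this]
  have hω2 : ω.re^2 + ω.im^2 = 1 := by
    have := hnsω; rw [Complex.normSq_apply] at this; nlinarith [this]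
  obtain ⟨ξ, hξdef⟩ : ∃ ξ : ℂ, ξ = ω * (starRingEnd ℂ) z := ⟨_, rfl⟩
  have hξre : ξ.re = ω.re*z.re + ω.im*z.im := by
    rw [hξdef]; simp [Complex.mul_re]
  have hnsξ : Complex.normSq ξ = 1 := by
    rw [hξdef, map_mul, Complex.normSq_conj, hnsω, hz1]; norm_num
  have hξ2 : ξ.re^2 + ξ.im^2 = 1 := by
    have := hnsξ; rw [Complex.normSq_apply] at this; nlinarith [this]
  have hmain : a^2+d^2-2*a*d*z.re = b^2+c^2-2*b*c*ξ.re := by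
    rw [hξre]
    simp [Complex.mul_re, Complex.sub_re, Complex.sub_im, Complex.mul_im] at hzp
    linarith [hzp]
  obtain ⟨m, hmdef⟩ : ∃ m : ℂ, m = c*ξ - b := ⟨_, rfl⟩
  have hns_daz : Complex.normSq ((d:ℂ) - a*z) = a^2+d^2-2*a*d*z.re := by
    simp [Complex.normSq_apply, Complex.sub_re, Complex.sub_im, Complex.mul_re, Complex.mul_im]
    linear_combination a^2 * hz2
  have hnsm : Complex.normSq m = b^2+c^2-2*b*c*ξ.re := by
    rw [hmdef]
    simp [Complex.normSq_apply, Complex.sub_re, Complex.sub_im, Complex.mul_re, Complex.mul_im]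
    linear_combination c^2 * hξ2
  have hkey : Complex.normSq ((d:ℂ) - a*z) = Complex.normSq m := by
    rw [hns_daz, hnsm]; exact hmain
  have habsz : ‖z‖ = 1 := abs_eq_of_normSq' z 1 zero_le_one (by rw [hz1]; norm_num)
  by_cases hm : m = 0
  · -- degenerate subcase: b = c, a = d, w = 1
    have hcξ : (c:ℂ)*ξ = b := by
      have := hm; rw [hmdef, sub_eq_zero] at this; exact this
    have hcb : c = b := by
      have h3 : Complex.normSq ((c:ℂ)*ξ) = Complex.normSq ((b:ℂ)) := by rw [hcξ]
      rw [map_mul, Complex.normSq_ofReal, Complex.normSq_ofReal, hnsξ] at h3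
      have h4 : (c-b)*(c+b) = 0 := by nlinarith [h3]
      rcases mul_eq_zero.mp h4 with h | h
      · linarith
      · linarith
    have hξ1 : ξ = 1 := by
      rw [hcb] at hcξ
      have : (b:ℂ)*ξ = (b:ℂ)*1 := by rw [hcξ, mul_one]
      exact mul_left_cancel₀ hb' this
    have hξre1 : ξ.re = 1 := by rw [hξ1]; simp
    have hzre_le : z.re ≤ 1 := by nlinarith [sq_nonneg z.im]
    have had : a = d := by
      have h6' : (a-d)^2 = 2*a*d*(z.re-1) := by
        linear_combination hmain - 2*b*c*hξre1 + (c-b)*hcb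
      have h6 : (a-d)^2 ≤ 0 := by
        linarith [h6', mul_nonneg (mul_pos ha hd).le (by linarith : (0:ℝ) ≤ 1 - z.re)]
      have h7 : (a-d)^2 = 0 := le_antisymm h6 (sq_nonneg _)
      have h8 : a - d = 0 := by
        exact (pow_eq_zero_iff two_ne_zero).mp h7
      linarith
    have hzre1 : z.re = 1 := by
      have h10 : 2*a*d*(1-z.re) = 0 := by
        linear_combination hmain - 2*b*c*hξre1 + (d-a)*had + (c-b)*hcb
      have h11 : (2*a*d : ℝ) ≠ 0 := by positivity
      have := (mul_eq_zero.mp h10).resolve_left h11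
      linarith
    have hz_one : z = 1 := by
      have him2 : z.im^2 = 0 := by linear_combination hz2 - (z.re + 1)*hzre1
      have him : z.im = 0 := (pow_eq_zero_iff two_ne_zero).mp him2
      apply Complex.ext <;> simp [hzre1, him]
    have hω1 : ω = 1 := by
      have h5 := hξ1
      rw [hξdef, hz_one] at h5
      simpa using h5
    have hw1 : w = 1 := by
      rw [hwdef, hω1, hcb, had]
      rw [one_mul, div_eq_one_iff_eq (mul_ne_zero hb' hd')]
      ring
    refine ⟨0, (a:ℂ), (a:ℂ)+(b:ℂ), (a:ℂ), ⟨?_, ?_, ?_, ?_⟩, ?_⟩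
    · simpa using abs_of_pos ha
    · simpa using abs_of_pos hb
    · rw [show (a:ℂ) - ((a:ℂ)+(b:ℂ)) = -(b:ℂ) by ring, norm_neg]
      rw [hcb]; simpa using abs_of_pos hb
    · rw [show (0:ℂ) - (a:ℂ) = -(a:ℂ) by ring, norm_neg]
      rw [← had]; simpa using abs_of_pos ha
    · rw [uniformizer, hw1]
      rw [show (a:ℂ) - ((a:ℂ)+(b:ℂ)) = -(b:ℂ) by ring, sub_zero]
      rw [div_mul_div_comm, mul_comm]
      exact div_self (by simp [hb.ne', ha.ne'])
  · -- main case
    have hdaz : (d:ℂ) - a*z ≠ 0 := by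
      intro h
      apply hm
      rw [← Complex.normSq_eq_zero, ← hkey, h]
      simp
    obtain ⟨v₃, hv₃def⟩ : ∃ v₃ : ℂ, v₃ = (c*ξ*((a:ℂ)*z) - b*d)/m := ⟨_, rfl⟩
    have hv₃m : v₃ * m = c*ξ*((a:ℂ)*z) - b*d := by
      rw [hv₃def, div_mul_cancel₀ _ hm]
    have hnsm_ne : Complex.normSq m ≠ 0 := fun h => hm (Complex.normSq_eq_zero.mp h)
    obtain ⟨q, hqdef⟩ : ∃ q : ℂ, q = ((d:ℂ) - a*z)/m := ⟨_, rfl⟩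
    have hqne : q ≠ 0 := hqdef ▸ div_ne_zero hdaz hm
    have hnsq : Complex.normSq q = 1 := by
      rw [hqdef, Complex.normSq_div, hkey, div_self hnsm_ne]
    have h23 : (a:ℂ)*z - v₃ = b*q := by
      rw [hqdef, mul_div_assoc', eq_div_iff hm, sub_mul, hv₃m, hmdef]; ring
    have h43 : (d:ℂ) - v₃ = c*ξ*q := by
      rw [hqdef, mul_div_assoc', eq_div_iff hm, sub_mul, hv₃m, hmdef]; ring
    refine ⟨0, (a:ℂ)*z, v₃, (d:ℂ), ⟨?_, ?_, ?_, ?_⟩, ?_⟩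
    · rw [sub_zero, norm_mul, habsz, mul_one]
      simpa using abs_of_pos ha
    · apply abs_eq_of_normSq' _ _ hb.le
      rw [show v₃ - (a:ℂ)*z = -((a:ℂ)*z - v₃) by ring, Complex.normSq_neg, h23,
        map_mul, Complex.normSq_ofReal, hnsq]
      ring
    · apply abs_eq_of_normSq' _ _ hc.le
      rw [h43, map_mul, map_mul, Complex.normSq_ofReal, hnsξ, hnsq]
      ring
    · rw [zero_sub, norm_neg]
      simpa using abs_of_pos hd
    · rw [uniformizer, sub_zero, sub_zero, h23, h43]
      have hzz : z * (starRingEnd ℂ) z = 1 := by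
        rw [Complex.mul_conj, hz1]; norm_num
      rw [hwdef, hξdef]
      field_simp
      linear_combination ω * hzz


theorem stmt_11 (a b c d : ℝ) (ha : 0 < a) (hb : 0 < b) (hc : 0 < c) (hd : 0 < d)
    (hq : StrictQuad a b c d)
    (hzero : (a + b - c - d) * (a - b + c - d) * (a - b - c + d) = 0) :
    ∀ w : ℂ, ‖w‖ = a * c / (b * d) →
      ∃ v₁ v₂ v₃ v₄ : ℂ, IsConfig a b c d v₁ v₂ v₃ v₄ ∧
        uniformizer v₁ v₂ v₃ v₄ = w := by
  intro w hw
  have ha' : (a:ℂ) ≠ 0 := Complex.ofReal_ne_zero.mpr ha.ne'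
  have hb' : (b:ℂ) ≠ 0 := Complex.ofReal_ne_zero.mpr hb.ne'
  have hc' : (c:ℂ) ≠ 0 := Complex.ofReal_ne_zero.mpr hc.ne'
  have hd' : (d:ℂ) ≠ 0 := Complex.ofReal_ne_zero.mpr hd.ne'
  obtain ⟨ω, hωdef⟩ : ∃ ω : ℂ, ω = w * (b*d)/(a*c) := ⟨_, rfl⟩
  have hwdef : w = ω * (a*c)/(b*d) := by
    rw [hωdef]; field_simp
  have habsω : ‖ω‖ = 1 := by
    rw [hωdef, norm_div, norm_mul, norm_mul, hw]
    simp only [Complex.norm_real, Real.norm_eq_abs, abs_of_pos ha, abs_of_pos hb, abs_of_pos hc, abs_of_pos hd]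
    field_simp
    rw [norm_mul, Complex.norm_real, Complex.norm_real, Real.norm_eq_abs, Real.norm_eq_abs, abs_of_pos ha, abs_of_pos hc]
  have hnsω : Complex.normSq ω = 1 := by
    rw [← Complex.sq_norm, habsω]; norm_num
  have hω2 : ω.re^2 + ω.im^2 = 1 := by
    have := hnsω; rw [Complex.normSq_apply] at this; nlinarith [this]
  have hreω : ω.re ≤ 1 := by nlinarith [sq_nonneg ω.im, hω2]
  obtain ⟨K, hKdef⟩ : ∃ K : ℝ, K = b^2 + c^2 - a^2 - d^2 := ⟨_, rfl⟩
  obtain ⟨p, hpdef⟩ : ∃ p : ℂ, p = 2*b*c*ω - 2*a*d := ⟨_, rfl⟩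
  have hpre : p.re = 2*b*c*ω.re - 2*a*d := by simp [hpdef]
  have hpim : p.im = 2*b*c*ω.im := by simp [hpdef]
  have hnsp : Complex.normSq p = 4*b^2*c^2 + 4*a^2*d^2 - 8*a*b*c*d*ω.re := by
    rw [Complex.normSq_apply, hpre, hpim]; linear_combination (4*b^2*c^2)*hω2
  have hK2 : K^2 = 4*(b*c - a*d)^2 := by
    rw [hKdef]; linear_combination (a+b+c+d) * hzero
  have hle : K^2 ≤ Complex.normSq p := by
    rw [hnsp, hK2]
    nlinarith [mul_pos (mul_pos (mul_pos ha hb) hc) hd, hreω]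
  obtain ⟨s, hsdef⟩ : ∃ s : ℝ, s = Real.sqrt (Complex.normSq p - K^2) := ⟨_, rfl⟩
  have hs2 : s^2 = Complex.normSq p - K^2 := by rw [hsdef]; exact Real.sq_sqrt (by linarith)
  obtain ⟨z, hzdef⟩ :
      ∃ z : ℂ, z = if p = 0 then 1 else ((K : ℂ) - s*Complex.I)/((starRingEnd ℂ) p) := ⟨_, rfl⟩
  have hz1 : Complex.normSq z = 1 := by
    rw [hzdef]
    split_ifs with h
    · simp
    · rw [Complex.normSq_div, Complex.normSq_conj]
      have hKs : Complex.normSq ((K:ℂ) - s*Complex.I) = K^2 + s^2 := by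
        simp [Complex.normSq_apply]; ring
      have hpne : Complex.normSq p ≠ 0 := fun hh => h (Complex.normSq_eq_zero.mp hh)
      rw [hKs, hs2]
      have h2 : K^2 + (Complex.normSq p - K^2) = Complex.normSq p := by ring
      rw [h2, div_self hpne]
  have hzp : ((starRingEnd ℂ) z * p).re = K := by
    rw [hzdef]
    split_ifs with h
    · have hK0 : K = 0 := by
        have h0 : Complex.normSq p = 0 := by rw [h]; simp
        nlinarith [hle, h0, sq_nonneg K]
      simp [h, hK0]
    · rw [map_div₀, Complex.conj_conj]
      rw [div_mul_cancel₀ _ h]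
      simp
  rw [hpdef] at hzp
  rw [hKdef] at hzp
  exact quad_aux a b c d ha hb hc hd ω z hnsω hz1 w hwdef hzp
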